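/- Let (αᵢ)ᵢ≥1 be a sequence of positive reals with α = inf αᵢ > 0 and (bᵢ)ᵢ≥1 a sequence of positive integers with bᵢ ∣ bᵢ₊₁ for all i. Define Hᵢ = {0} ∪ (Q≥αᵢ ∩ bᵢ⁻¹·Z) and H = ⋃ᵢ Hᵢ. Then H is a Puiseux monoid whose quotient group equals ⋃ᵢ bᵢ⁻¹·Z, and H is strongly primary with M(H) ≤ 1 + sup{⌈α⁻¹(3αᵢ+1)⌉ : i ∈ N}. -/

import Mathlib

namespace PuiseuxAux310

/-- The additive subgroup `b⁻¹ℤ` of `ℚ`. -/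
def D (n : ℕ) : AddSubgroup ℚ where
  carrier := {q : ℚ | ∃ m : ℤ, q = (m : ℚ) / (n : ℚ)}
  zero_mem' := ⟨0, by simp⟩
  add_mem' := by
    rintro a c ⟨m, rfl⟩ ⟨m', rfl⟩
    exact ⟨m + m', by push_cast; rw [← add_div]⟩
  neg_mem' := by
    rintro a ⟨m, rfl⟩
    exact ⟨-m, by push_cast; rw [neg_div]⟩

lemma mem_D {n : ℕ} {q : ℚ} : q ∈ D n ↔ ∃ m : ℤ, q = (m : ℚ) / (n : ℚ) := Iff.rfl

lemma D_mono {m n : ℕ} (h : m ∣ n) (hn : 0 < n) : D m ≤ D n := by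
  rintro q ⟨k, rfl⟩
  obtain ⟨c, rfl⟩ := h
  have hc : (c : ℚ) ≠ 0 := by
    rcases Nat.eq_zero_or_pos c with h0 | h0
    · simp [h0] at hn
    · exact_mod_cast h0.ne'
  refine ⟨k * c, ?_⟩
  push_cast
  rw [mul_div_mul_right _ _ hc]

end PuiseuxAux310

open PuiseuxAux310 in
/-- Example 3.10 construction: for positive reals αᵢ with inf α = A > 0 and
positive integers bᵢ with bᵢ ∣ bᵢ₊₁, the set H = ⋃ᵢ ({0} ∪ (ℚ≥αᵢ ∩ bᵢ⁻¹ℤ)) is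
a Puiseux monoid with quotient group ⋃ᵢ bᵢ⁻¹ℤ, and H is strongly primary with
M(H) ≤ 1 + sup ⌈A⁻¹(3αᵢ+1)⌉. -/
theorem puiseux_construction_stronglyPrimary
    (α : ℕ → ℝ) (A : ℝ) (hA : 0 < A) (hglb : IsGLB (Set.range α) A)
    (b : ℕ → ℕ) (hb : ∀ i, 0 < b i) (hdvd : ∀ i, b i ∣ b (i + 1)) :
    ∀ S : Set ℚ, S = {0} ∪ ⋃ i : ℕ,
        {q : ℚ | α i ≤ (q : ℝ) ∧ ∃ m : ℤ, q = (m : ℚ) / (b i : ℚ)} →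
    -- H is a Puiseux monoid
    ((0 : ℚ) ∈ S ∧ (∀ x ∈ S, ∀ y ∈ S, x + y ∈ S) ∧ (∀ x ∈ S, 0 ≤ x)) ∧
    -- its quotient group is ⋃ᵢ bᵢ⁻¹·ℤ
    ((AddSubgroup.closure S : Set ℚ) =
      ⋃ i : ℕ, {q : ℚ | ∃ m : ℤ, q = (m : ℚ) / (b i : ℚ)}) ∧
    -- H is strongly primary
    (∀ a ∈ S, a ≠ 0 → ∃ n : ℕ, 0 < n ∧ ∀ f : Fin n → ℚ,
      (∀ j, f j ∈ S ∧ f j ≠ 0) → ∃ h ∈ S, (∑ j, f j) = a + h) ∧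
    -- with M(H) ≤ 1 + sup ⌈A⁻¹(3αᵢ+1)⌉
    (∀ u ∈ S, u ≠ 0 →
      (¬∃ x ∈ S, ∃ y ∈ S, x ≠ 0 ∧ y ≠ 0 ∧ u = x + y) →
      ∃ (n : ℕ) (i : ℕ), 0 < n ∧
        (∀ f : Fin n → ℚ, (∀ j, f j ∈ S ∧ f j ≠ 0) →
          ∃ h ∈ S, (∑ j, f j) = u + h) ∧
        (n : ℤ) ≤ 1 + ⌈(3 * α i + 1) / A⌉) := by
  intro S hS
  have hAle : ∀ i, A ≤ α i := fun i => hglb.1 ⟨i, rfl⟩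
  have hdvd' : ∀ i j, i ≤ j → b i ∣ b j := by
    intro i j h
    induction j, h using Nat.le_induction with
    | base => exact dvd_rfl
    | succ n hn ih => exact ih.trans (hdvd n)
  have hbQ : ∀ i, ((b i : ℚ)) ≠ 0 := fun i => by exact_mod_cast (hb i).ne'
  have hmem : ∀ q : ℚ, q ∈ S ↔ q = 0 ∨ ∃ i, α i ≤ (q : ℝ) ∧ q ∈ D (b i) := by
    intro q
    rw [hS]
    simp only [Set.mem_union, Set.mem_singleton_iff, Set.mem_iUnion, Set.mem_setOf_eq, mem_D]
  -- any nonzero element of S is at least A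
  have hApos : ∀ q : ℚ, q ∈ S → q ≠ 0 → A ≤ (q : ℝ) := by
    intro q hq hq0
    rcases (hmem q).1 hq with rfl | ⟨i, hi, _⟩
    · exact absurd rfl hq0
    · exact (hAle i).trans hi
  -- the key sumset lemma
  have key : ∀ (a : ℚ) (i₀ : ℕ), α i₀ ≤ (a : ℝ) → a ∈ D (b i₀) →
      ∀ n : ℕ, 0 < n → (a : ℝ) ≤ ((n : ℝ) - 1) * A → (a : ℝ) + α i₀ ≤ (n : ℝ) * A →
      ∀ f : Fin n → ℚ, (∀ j, f j ∈ S ∧ f j ≠ 0) → ∃ h ∈ S, (∑ j, f j) = a + h := by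
    intro a i₀ hai₀ haD n hnpos hn1 hn2 f hf
    have hfmem : ∀ j, ∃ i, α i ≤ ((f j : ℚ) : ℝ) ∧ f j ∈ D (b i) := by
      intro j
      exact ((hmem (f j)).1 (hf j).1).resolve_left (hf j).2
    choose idx hidx1 hidx2 using hfmem
    set K' : ℕ := Finset.univ.sup idx with hK'
    set K : ℕ := max i₀ K' with hK
    have hidxK : ∀ j : Fin n, idx j ≤ K :=
      fun j => le_trans (Finset.le_sup (Finset.mem_univ j)) (le_max_right _ _)
    have hsumD : (∑ j, f j) ∈ D (b K) :=
      sum_mem fun j _ =>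
        D_mono (hdvd' _ _ (hidxK j)) (hb K) (hidx2 j)
    have haDK : a ∈ D (b K) :=
      D_mono (hdvd' _ _ (le_max_left _ _)) (hb K) haD
    have hhD : (∑ j, f j) - a ∈ D (b K) := sub_mem hsumD haDK
    -- real-valued estimates
    have hfA : ∀ j : Fin n, A ≤ ((f j : ℚ) : ℝ) := fun j => (hAle (idx j)).trans (hidx1 j)
    have hsum_cast : (((∑ j, f j : ℚ)) : ℝ) = ∑ j, ((f j : ℚ) : ℝ) := by push_cast; ring
    have hαK : α K ≤ (((∑ j, f j : ℚ)) : ℝ) - (a : ℝ) := by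
      rcases le_total K' i₀ with hle | hle
      · -- K = i₀
        have hKi : K = i₀ := max_eq_left hle
        have : (n : ℝ) * A ≤ ∑ j, ((f j : ℚ) : ℝ) := by
          calc (n : ℝ) * A = ∑ _j : Fin n, A := by
                rw [Finset.sum_const, Finset.card_univ, Fintype.card_fin, nsmul_eq_mul]
            _ ≤ ∑ j, ((f j : ℚ) : ℝ) := Finset.sum_le_sum fun j _ => hfA j
        rw [hKi, hsum_cast]
        linarith
      · -- K = K'
        have hKi : K = K' := max_eq_right hle
        obtain ⟨j₀, -, hj₀⟩ :=
          Finset.exists_mem_eq_sup Finset.univ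
            (Finset.univ_nonempty_iff.2 (Fin.pos_iff_nonempty.1 hnpos)) idx
        have hsplit : ∑ j, ((f j : ℚ) : ℝ)
            = ((f j₀ : ℚ) : ℝ) + ∑ j ∈ Finset.univ.erase j₀, ((f j : ℚ) : ℝ) :=
          (Finset.add_sum_erase _ _ (Finset.mem_univ j₀)).symm
        have hcard : (Finset.univ.erase j₀).card = n - 1 := by
          rw [Finset.card_erase_of_mem (Finset.mem_univ j₀), Finset.card_univ,
            Fintype.card_fin]
        have h1 : ((n : ℝ) - 1) * A ≤ ∑ j ∈ Finset.univ.erase j₀, ((f j : ℚ) : ℝ) := by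
          calc ((n : ℝ) - 1) * A = ((n - 1 : ℕ) : ℝ) * A := by
                rw [Nat.cast_sub hnpos]; push_cast; ring
            _ = ∑ _j ∈ Finset.univ.erase j₀, A := by
                rw [Finset.sum_const, hcard, nsmul_eq_mul]
            _ ≤ _ := Finset.sum_le_sum fun j _ => hfA j
        have h2 : α K ≤ ((f j₀ : ℚ) : ℝ) := by
          rw [hKi, hK', hj₀]; exact hidx1 j₀
        rw [hsum_cast, hsplit]
        linarith
    refine ⟨(∑ j, f j) - a, ?_, by ring⟩
    rw [hmem]
    refine Or.inr ⟨K, ?_, hhD⟩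
    push_cast
    push_cast at hαK
    linarith
  refine ⟨⟨?_, ?_, ?_⟩, ?_, ?_, ?_⟩
  · exact (hmem 0).2 (Or.inl rfl)
  · -- closed under addition
    intro x hx y hy
    rcases (hmem x).1 hx with rfl | ⟨i, hxi, hxD⟩
    · simpa using hy
    rcases (hmem y).1 hy with rfl | ⟨j, hyj, hyD⟩
    · simpa using hx
    have hx0 : (0 : ℝ) < (x : ℝ) := lt_of_lt_of_le (hA.trans_le (hAle i)) hxi
    have hy0 : (0 : ℝ) < (y : ℝ) := lt_of_lt_of_le (hA.trans_le (hAle j)) hyj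
    refine (hmem _).2 (Or.inr ⟨max i j, ?_, ?_⟩)
    · push_cast
      rcases le_total i j with h | h
      · rw [max_eq_right h]; linarith
      · rw [max_eq_left h]; linarith
    · exact add_mem (D_mono (hdvd' _ _ (le_max_left _ _)) (hb _) hxD)
        (D_mono (hdvd' _ _ (le_max_right _ _)) (hb _) hyD)
  · -- nonneg
    intro x hx
    rcases eq_or_ne x 0 with rfl | hx0
    · exact le_refl 0
    · have := hApos x hx hx0
      have h0 : (0 : ℝ) ≤ (x : ℝ) := le_trans hA.le this
      exact_mod_cast h0
  · -- quotient group
    have hGdef : ∀ q : ℚ,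
        q ∈ (⋃ i : ℕ, {q : ℚ | ∃ m : ℤ, q = (m : ℚ) / (b i : ℚ)}) ↔ ∃ i, q ∈ D (b i) := by
      intro q; simp only [Set.mem_iUnion, Set.mem_setOf_eq, mem_D]
    let G : AddSubgroup ℚ :=
      { carrier := ⋃ i : ℕ, {q : ℚ | ∃ m : ℤ, q = (m : ℚ) / (b i : ℚ)}
        zero_mem' := Set.mem_iUnion.2 ⟨0, 0, by simp⟩
        add_mem' := by
          intro x y hx hy
          obtain ⟨i, hx⟩ := (hGdef x).1 hx
          obtain ⟨j, hy⟩ := (hGdef y).1 hy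
          exact (hGdef _).2 ⟨max i j,
            add_mem (D_mono (hdvd' _ _ (le_max_left _ _)) (hb _) hx)
              (D_mono (hdvd' _ _ (le_max_right _ _)) (hb _) hy)⟩
        neg_mem' := by
          intro x hx
          obtain ⟨i, hx⟩ := (hGdef x).1 hx
          exact (hGdef _).2 ⟨i, neg_mem hx⟩ }
    apply Set.Subset.antisymm
    · have hle : AddSubgroup.closure S ≤ G := by
        rw [AddSubgroup.closure_le]
        intro q hq
        rcases (hmem q).1 hq with rfl | ⟨i, -, hqD⟩
        · exact G.zero_mem
        · exact (hGdef q).2 ⟨i, hqD⟩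
      exact fun q hq => hle hq
    · intro q hq
      obtain ⟨i, hqD⟩ := (hGdef q).1 hq
      have hNge : α i + |(q : ℝ)| ≤ ((⌈α i + |(q : ℝ)|⌉₊ : ℝ)) + 1 := by
        have := Nat.le_ceil (α i + |(q : ℝ)|)
        linarith
      have habs : -(|(q : ℝ)|) ≤ (q : ℝ) := neg_abs_le _
      have habs0 : (0 : ℝ) ≤ |(q : ℝ)| := abs_nonneg _
      have hNmem : (((⌈α i + |(q : ℝ)|⌉₊ + 1 : ℕ) : ℚ)) ∈ S := by
        refine (hmem _).2 (Or.inr ⟨i, ?_, ⟨((⌈α i + |(q : ℝ)|⌉₊ + 1 : ℕ) : ℤ) * b i, ?_⟩⟩)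
        · push_cast; linarith
        · push_cast; rw [mul_div_assoc, div_self (hbQ i), mul_one]
      obtain ⟨m, hm⟩ := hqD
      have hqN : q + ((⌈α i + |(q : ℝ)|⌉₊ + 1 : ℕ) : ℚ) ∈ S := by
        refine (hmem _).2 (Or.inr ⟨i, ?_, ⟨m + ((⌈α i + |(q : ℝ)|⌉₊ + 1 : ℕ) : ℤ) * b i, ?_⟩⟩)
        · push_cast; linarith
        · rw [hm]
          have hb0 := hbQ i
          push_cast
          field_simp
      have hq_eq : q = (q + ((⌈α i + |(q : ℝ)|⌉₊ + 1 : ℕ) : ℚ)) - ((⌈α i + |(q : ℝ)|⌉₊ + 1 : ℕ) : ℚ) := by ring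
      rw [hq_eq]
      exact sub_mem (AddSubgroup.subset_closure hqN) (AddSubgroup.subset_closure hNmem)
  · -- strongly primary
    intro a ha ha0
    obtain ⟨i₀, hai, haD⟩ := ((hmem a).1 ha).resolve_left ha0
    have ha_pos : (0 : ℝ) < (a : ℝ) := lt_of_lt_of_le (hA.trans_le (hAle i₀)) hai
    set n : ℕ := ⌈2 * (a : ℝ) / A⌉₊ + 1 with hn
    have hceil : 2 * (a : ℝ) / A ≤ (⌈2 * (a : ℝ) / A⌉₊ : ℝ) := Nat.le_ceil _
    have h2a : 2 * (a : ℝ) ≤ (⌈2 * (a : ℝ) / A⌉₊ : ℝ) * A := by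
      rw [div_le_iff₀ hA] at hceil; linarith
    refine ⟨n, Nat.succ_pos _, ?_⟩
    have hnR : ((n : ℕ) : ℝ) = (⌈2 * (a : ℝ) / A⌉₊ : ℝ) + 1 := by rw [hn]; push_cast; ring
    refine key a i₀ hai haD n (Nat.succ_pos _) ?_ ?_
    · rw [hnR]; linarith
    · rw [hnR]; nlinarith
  · -- atoms
    intro u hu hu0 hatom
    obtain ⟨i₀, hui, huD⟩ := ((hmem u).1 hu).resolve_left hu0
    obtain ⟨m₀, hm₀⟩ := huD
    have hbpos : (0 : ℝ) < ((b i₀ : ℕ) : ℝ) := by exact_mod_cast hb i₀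
    have hα0 : (0 : ℝ) < α i₀ := hA.trans_le (hAle i₀)
    -- u is small since it is an atom
    have hu_lt : (u : ℝ) < 2 * α i₀ + 1 := by
      by_contra hcon
      push_neg at hcon
      set x : ℚ := (⌈α i₀ * (b i₀ : ℕ)⌉ : ℚ) / ((b i₀ : ℕ) : ℚ) with hx
      have hxR : ((x : ℚ) : ℝ) = ((⌈α i₀ * (b i₀ : ℕ)⌉ : ℤ) : ℝ) / ((b i₀ : ℕ) : ℝ) := by
        rw [hx]; push_cast; ring
      have hxge : α i₀ ≤ (x : ℝ) := by
        rw [hxR, le_div_iff₀ hbpos]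
        exact Int.le_ceil _
      have hxle : (x : ℝ) ≤ α i₀ + 1 := by
        rw [hxR, div_le_iff₀ hbpos]
        have h1 : ((⌈α i₀ * (b i₀ : ℕ)⌉ : ℤ) : ℝ) < α i₀ * (b i₀ : ℕ) + 1 :=
          Int.ceil_lt_add_one _
        have hb1 : (1 : ℝ) ≤ ((b i₀ : ℕ) : ℝ) := by exact_mod_cast hb i₀
        nlinarith
      have hxD : x ∈ D (b i₀) := ⟨⌈α i₀ * (b i₀ : ℕ)⌉, rfl⟩
      have hxS : x ∈ S := (hmem x).2 (Or.inr ⟨i₀, hxge, hxD⟩)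
      have hyge : α i₀ ≤ ((u - x : ℚ) : ℝ) := by push_cast; linarith
      have hyD : u - x ∈ D (b i₀) := sub_mem ⟨m₀, hm₀⟩ hxD
      have hyS : u - x ∈ S := (hmem _).2 (Or.inr ⟨i₀, hyge, hyD⟩)
      have hxne : x ≠ 0 := by
        intro h; rw [h] at hxge; simp at hxge; linarith
      have hyne : u - x ≠ 0 := by
        intro h; rw [h] at hyge; simp at hyge; linarith
      exact hatom ⟨x, hxS, u - x, hyS, hxne, hyne, by ring⟩
    set c : ℤ := ⌈(3 * α i₀ + 1) / A⌉ with hc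
    have hcpos : 0 < c := by
      rw [hc]
      refine Int.ceil_pos.2 (div_pos (by linarith) hA)
    set n : ℕ := c.toNat with hn
    have hnc : (n : ℝ) = (c : ℤ) := by
      rw [hn]; exact_mod_cast congrArg Int.cast (Int.toNat_of_nonneg hcpos.le)
    have hcA : 3 * α i₀ + 1 ≤ (c : ℝ) * A := by
      have := Int.le_ceil ((3 * α i₀ + 1) / A)
      rw [← hc] at this
      rw [div_le_iff₀ hA] at this
      linarith
    refine ⟨n + 1, i₀, Nat.succ_pos _, ?_, ?_⟩
    · refine key u i₀ hui ⟨m₀, hm₀⟩ (n + 1) (Nat.succ_pos _) ?_ ?_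
      · push_cast
        rw [hnc]
        linarith
      · push_cast
        rw [hnc]
        nlinarith
    · push_cast
      rw [hn, Int.toNat_of_nonneg hcpos.le, ← hc]
      linarith
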